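/- arXiv:1903.07876 — 5 statements merged into one kernel-verified Lean document; each statement's English description precedes it below -/
import Mathlib

section
/- Let F be a nonempty finite set and f : F → ℝ a nonnegative function. Then ∑_{z∈F} f(z)³ ≤ |F|·(‖f‖₁/|F|)³ + 3·‖f‖_∞·∑_{z∈F} (f(z) − ‖f‖₁/|F|)², where ‖f‖₁ = ∑_{z∈F} f(z) and ‖f‖_∞ = max_{z∈F} f(z). -/
theorem third_moment_n3 {F : Type*} [Fintype F] [Nonempty F] (f : F → ℝ)
    (hf : ∀ z, 0 ≤ f z) :
    ∑ z, (f z) ^ 3 ≤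
      (Fintype.card F : ℝ) * ((∑ z, f z) / (Fintype.card F : ℝ)) ^ 3 +
        3 * (Finset.univ.sup' Finset.univ_nonempty f) *
          ∑ z, (f z - (∑ w, f w) / (Fintype.card F : ℝ)) ^ 2 := by
  set N : ℝ := (Fintype.card F : ℝ) with hNdef
  have hN : 0 < N := by rw [hNdef]; exact_mod_cast Fintype.card_pos
  set m : ℝ := (∑ z, f z) / N with hm
  set M : ℝ := Finset.univ.sup' Finset.univ_nonempty f with hM
  have hfM : ∀ z, f z ≤ M := fun z => Finset.le_sup' f (Finset.mem_univ z)
  have hmM : m ≤ M := by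
    rw [hm, div_le_iff₀ hN]
    calc ∑ z, f z ≤ ∑ _z : F, M := Finset.sum_le_sum (fun z _ => hfM z)
    _ = M * N := by simp [mul_comm, hNdef]
  have hsum : ∑ z, f z = N * m := by
    rw [hm]; field_simp
  have hsum0 : ∑ z, (f z - m) = 0 := by
    rw [Finset.sum_sub_distrib, Finset.sum_const, Finset.card_univ, hsum]
    simp [mul_comm, hNdef]
  have key : ∑ z, f z ^ 3
      = N * m ^ 3 + 3 * m * ∑ z, (f z - m) ^ 2 + ∑ z, ((f z - m) ^ 3) := by
    have : ∀ z : F, f z ^ 3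
        = m ^ 3 + 3 * m ^ 2 * (f z - m) + 3 * m * (f z - m) ^ 2 + (f z - m) ^ 3 :=
      fun z => by ring
    rw [Finset.sum_congr rfl (fun z _ => this z)]
    simp only [Finset.sum_add_distrib, ← Finset.mul_sum, hsum0, Finset.sum_const,
      Finset.card_univ, nsmul_eq_mul]
    push_cast
    ring
  rw [key]
  have hbound : 3 * m * ∑ z, (f z - m) ^ 2 + ∑ z, ((f z - m) ^ 3)
      ≤ 3 * M * ∑ z, (f z - m) ^ 2 := by
    have : ∑ z, (3 * m * (f z - m) ^ 2 + (f z - m) ^ 3)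
        ≤ ∑ z, 3 * M * (f z - m) ^ 2 := by
      apply Finset.sum_le_sum
      intro z _
      nlinarith [hfM z, hmM, sq_nonneg (f z - m), hf z]
    simpa [Finset.sum_add_distrib, ← Finset.mul_sum] using this
  linarith
end

section
/- Let F be a nonempty finite set, n ≥ 2 a natural number, and f : F → ℝ nonnegative. Then ∑_{z∈F} f(z)ⁿ ≤ |F|·(‖f‖₁/|F|)ⁿ + (n(n−1)/2)·‖f‖_∞^{n−2}·∑_{z∈F} (f(z) − ‖f‖₁/|F|)². -/
lemma taylor_pow_aux (k : ℕ) (a m M : ℝ) (ha : 0 ≤ a) (haM : a ≤ M)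
    (hm : 0 ≤ m) (hmM : m ≤ M) :
    a ^ (k + 2) ≤ m ^ (k + 2) + (k + 2) * m ^ (k + 1) * (a - m) +
      (((k + 2) * (k + 1) : ℝ) / 2) * M ^ k * (a - m) ^ 2 := by
  induction k with
  | zero => push_cast; nlinarith [sq_nonneg (a - m)]
  | succ k IH =>
      have hM : 0 ≤ M := ha.trans haM
      have hMk : (0:ℝ) ≤ M ^ k := pow_nonneg hM k
      have hsq : (0:ℝ) ≤ (a - m) ^ 2 := sq_nonneg _
      have h2 : m ^ (k + 1) ≤ M * M ^ k := by
        calc m ^ (k + 1) ≤ M ^ (k + 1) := pow_le_pow_left₀ hm hmM _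
        _ = M * M ^ k := by ring
      have bridge : a * (m ^ (k + 2) + (k + 2) * m ^ (k + 1) * (a - m) +
            (((k + 2) * (k + 1) : ℝ) / 2) * M ^ k * (a - m) ^ 2) ≤
          m ^ (k + 3) + (k + 3) * m ^ (k + 2) * (a - m) +
            (((k + 3) * (k + 2) : ℝ) / 2) * (M * M ^ k) * (a - m) ^ 2 := by
        have e1 : m ^ (k + 3) = m ^ 2 * m ^ (k + 1) := by ring
        have e2 : m ^ (k + 2) = m * m ^ (k + 1) := by ring
        rw [e1, e2]
        nlinarith [mul_nonneg (mul_nonneg (by positivity : (0:ℝ) ≤ (((k:ℝ)+2)*((k:ℝ)+1))/2) hsq)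
            (mul_nonneg (sub_nonneg.2 haM) hMk),
          mul_nonneg (mul_nonneg (by positivity : (0:ℝ) ≤ (k:ℝ)+2) hsq) (sub_nonneg.2 h2)]
      have key : a ^ (k + 3) ≤ a * (m ^ (k + 2) + (k + 2) * m ^ (k + 1) * (a - m) +
          (((k + 2) * (k + 1) : ℝ) / 2) * M ^ k * (a - m) ^ 2) := by
        calc a ^ (k + 3) = a * a ^ (k + 2) := by ring
        _ ≤ _ := mul_le_mul_of_nonneg_left IH ha
      have goal_eq : m ^ (k + 1 + 2) + ((k:ℝ) + 1 + 2) * m ^ (k + 1 + 1) * (a - m) +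
            ((((k:ℝ) + 1 + 2) * ((k:ℝ) + 1 + 1)) / 2) * M ^ (k + 1) * (a - m) ^ 2 =
          m ^ (k + 3) + ((k:ℝ) + 3) * m ^ (k + 2) * (a - m) +
            ((((k:ℝ) + 3) * ((k:ℝ) + 2)) / 2) * (M * M ^ k) * (a - m) ^ 2 := by ring
      push_cast
      rw [goal_eq, show k + 1 + 2 = k + 3 from rfl]
      exact key.trans bridge

theorem third_moment_general {F : Type*} [Fintype F] [Nonempty F] (n : ℕ) (hn : 2 ≤ n)
    (f : F → ℝ) (hf : ∀ z, 0 ≤ f z) :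
    ∑ z, (f z) ^ n ≤
      (Fintype.card F : ℝ) * ((∑ z, f z) / (Fintype.card F : ℝ)) ^ n +
        ((n * (n - 1) : ℝ) / 2) * (Finset.univ.sup' Finset.univ_nonempty f) ^ (n - 2) *
          ∑ z, (f z - (∑ w, f w) / (Fintype.card F : ℝ)) ^ 2 := by
  obtain ⟨k, rfl⟩ := Nat.exists_eq_add_of_le hn
  set M : ℝ := Finset.univ.sup' Finset.univ_nonempty f with hM
  set m : ℝ := (∑ z, f z) / (Fintype.card F : ℝ) with hm
  have hcard : (0:ℝ) < (Fintype.card F : ℝ) := by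
    exact_mod_cast Fintype.card_pos
  have hfM : ∀ z, f z ≤ M := fun z => Finset.le_sup' f (Finset.mem_univ z)
  have hM0 : 0 ≤ M := le_trans (hf (Classical.arbitrary F)) (hfM _)
  have hm0 : 0 ≤ m := div_nonneg (Finset.sum_nonneg fun z _ => hf z) hcard.le
  have hmM : m ≤ M := by
    rw [hm, div_le_iff₀ hcard]
    calc ∑ z, f z ≤ ∑ _z : F, M := Finset.sum_le_sum fun z _ => hfM z
    _ = M * (Fintype.card F : ℝ) := by rw [Finset.sum_const]; simp [mul_comm]
  have hsum0 : ∑ z, (f z - m) = 0 := by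
    rw [Finset.sum_sub_distrib, Finset.sum_const, hm]
    rw [Finset.card_univ, nsmul_eq_mul, mul_div_assoc', mul_div_cancel_left₀ _ hcard.ne', sub_self]
  have key : ∀ z, f z ^ (2 + k) ≤ m ^ (2 + k) + (k + 2) * m ^ (k + 1) * (f z - m) +
      (((k + 2) * (k + 1) : ℝ) / 2) * M ^ k * (f z - m) ^ 2 := by
    intro z
    have := taylor_pow_aux k (f z) m M (hf z) (hfM z) hm0 hmM
    rw [show k + 2 = 2 + k from by ring] at this
    exact this
  calc ∑ z, f z ^ (2 + k) ≤ ∑ z, (m ^ (2 + k) + (k + 2) * m ^ (k + 1) * (f z - m) +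
      (((k + 2) * (k + 1) : ℝ) / 2) * M ^ k * (f z - m) ^ 2) :=
        Finset.sum_le_sum fun z _ => key z
  _ = (Fintype.card F : ℝ) * m ^ (2 + k) + (k + 2) * m ^ (k + 1) * ∑ z, (f z - m) +
      (((k + 2) * (k + 1) : ℝ) / 2) * M ^ k * ∑ z, (f z - m) ^ 2 := by
        rw [Finset.sum_add_distrib, Finset.sum_add_distrib, ← Finset.mul_sum, ← Finset.mul_sum,
          Finset.sum_const]
        simp [mul_comm]
  _ = (Fintype.card F : ℝ) * m ^ (2 + k) +
      (((2 + k : ℕ) * ((2 + k : ℕ) - 1) : ℝ) / 2) * M ^ (2 + k - 2) * ∑ z, (f z - m) ^ 2 := by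
        rw [hsum0, show 2 + k - 2 = k from by omega]
        push_cast
        ring
  _ ≤ _ := le_refl _
end

section
/- Let A ⊆ 𝔽_q be nonempty. Then |AA + A| ≫ min{ q, |A|² / q^{1/2} } with an absolute implied constant. In particular, if |A| ≥ q^{3/4}, then |AA + A| ≫ q. -/
open Finset Complex

section Char
set_option linter.unusedSectionVars false
variable {F : Type} [Field F] [Fintype F] [DecidableEq F]

noncomputable def psiF (F : Type) [Field F] [Fintype F] : AddChar F ℂ :=
  AddChar.FiniteField.primitiveChar_to_Complex F

lemma psiF_prim : (psiF F).IsPrimitive :=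
  AddChar.FiniteField.primitiveChar_to_Complex_isPrimitive F

lemma ringChar_posF : 0 < ringChar F :=
  Nat.pos_of_ne_zero (CharP.ringChar_ne_zero_of_finite F)

lemma conj_psiF (x : F) : (starRingEnd ℂ) (psiF F x) = psiF F (-x) := by
  rw [AddChar.starComp_apply ringChar_posF, AddChar.inv_apply]

lemma sum_psiF (t : F) :
    ∑ b : F, psiF F (b * t) = if t = 0 then (Fintype.card F : ℂ) else 0 := by
  have := AddChar.sum_mulShift (ψ := psiF F) t psiF_prim
  rw [this]; split_ifs <;> simp

/-- General Parseval-type counting identity. -/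
lemma parseval_count {ι : Type} [DecidableEq ι] (T : Finset ι) (v : ι → F) :
    ∑ b : F, Complex.normSq (∑ t ∈ T, psiF F (b * v t))
      = (Fintype.card F : ℝ) * (((T ×ˢ T).filter (fun p => v p.1 = v p.2)).card : ℝ) := by
  apply Complex.ofReal_injective
  push_cast
  calc ∑ b : F, (Complex.normSq (∑ t ∈ T, psiF F (b * v t)) : ℂ)
      = ∑ b : F, ∑ p ∈ T ×ˢ T, psiF F (b * (v p.1 - v p.2)) := by
        refine Finset.sum_congr rfl fun b _ => ?_
        rw [← Complex.mul_conj, map_sum]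
        rw [Finset.sum_mul_sum]
        rw [Finset.sum_product]
        refine Finset.sum_congr rfl fun t _ => Finset.sum_congr rfl fun t' _ => ?_
        rw [conj_psiF, ← AddChar.map_add_eq_mul]
        congr 1; ring
    _ = ∑ p ∈ T ×ˢ T, ∑ b : F, psiF F (b * (v p.1 - v p.2)) := Finset.sum_comm
    _ = ∑ p ∈ T ×ˢ T, if v p.1 = v p.2 then (Fintype.card F : ℂ) else 0 := by
        refine Finset.sum_congr rfl fun p _ => ?_
        rw [sum_psiF]
        simp [sub_eq_zero]
    _ = (Fintype.card F : ℂ) * (((T ×ˢ T).filter (fun p => v p.1 = v p.2)).card : ℂ) := by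
        rw [Finset.sum_ite, Finset.sum_const, Finset.sum_const_zero, add_zero,
          nsmul_eq_mul, mul_comm]

lemma parseval_B (B : Finset F) :
    ∑ b : F, Complex.normSq (∑ y ∈ B, psiF F (b * y)) = (Fintype.card F : ℝ) * B.card := by
  have h := parseval_count B (id : F → F)
  simp only [id] at h
  rw [h]
  congr 2
  have : ((B ×ˢ B).filter (fun p : F × F => p.1 = p.2)) = B.diag := by
    ext p
    simp only [Finset.mem_diag, Finset.mem_filter, Finset.mem_product]
    constructor
    · rintro ⟨⟨h1, h2⟩, h3⟩; exact ⟨h1, h3⟩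
    · rintro ⟨h1, h2⟩; exact ⟨⟨h1, h2 ▸ h1⟩, h2⟩
  rw [this, Finset.diag_card]

end Char

section Main
set_option linter.unusedSectionVars false
variable {F : Type} [Field F] [Fintype F] [DecidableEq F]

/-- For `b ≠ 0`, the bilinear character sum over `A' × A` is small. -/
lemma cross_bound (A' A : Finset F) {b : F} (hb : b ≠ 0) :
    Complex.normSq (∑ p ∈ A' ×ˢ A, psiF F (b * (p.1 * p.2)))
      ≤ (A'.card : ℝ) * ((Fintype.card F : ℝ) * A.card) := by
  set h : F → ℂ := fun a => ∑ x ∈ A, psiF F ((b * a) * x) with hh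
  have h1 : ∑ p ∈ A' ×ˢ A, psiF F (b * (p.1 * p.2)) = ∑ a ∈ A', h a := by
    rw [Finset.sum_product]
    refine Finset.sum_congr rfl fun a _ => Finset.sum_congr rfl fun x _ => ?_
    congr 1; ring
  rw [h1]
  have h2 : Complex.normSq (∑ a ∈ A', h a) ≤ (A'.card : ℝ) * ∑ a ∈ A', Complex.normSq (h a) := by
    calc Complex.normSq (∑ a ∈ A', h a) = ‖∑ a ∈ A', h a‖ ^ 2 := by
          rw [Complex.sq_norm]
      _ ≤ (∑ a ∈ A', ‖h a‖) ^ 2 := by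
          have := norm_sum_le A' h
          exact pow_le_pow_left₀ (norm_nonneg _) this 2
      _ ≤ (A'.card : ℝ) * ∑ a ∈ A', ‖h a‖ ^ 2 := sq_sum_le_card_mul_sum_sq
      _ = (A'.card : ℝ) * ∑ a ∈ A', Complex.normSq (h a) := by
          congr 1
          exact Finset.sum_congr rfl fun a _ => by rw [Complex.sq_norm]
  refine h2.trans ?_
  have h3 : ∑ a ∈ A', Complex.normSq (h a) ≤ (Fintype.card F : ℝ) * A.card := by
    have hinj : Set.InjOn (fun a => b * a) A' := fun x _ y _ hxy => by
      exact mul_left_cancel₀ hb hxy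
    calc ∑ a ∈ A', Complex.normSq (h a)
        = ∑ c ∈ A'.image (fun a => b * a), Complex.normSq (∑ x ∈ A, psiF F (c * x)) := by
          rw [Finset.sum_image fun x hx y hy => hinj hx hy]
      _ ≤ ∑ c : F, Complex.normSq (∑ x ∈ A, psiF F (c * x)) := by
          refine Finset.sum_le_sum_of_subset_of_nonneg (Finset.subset_univ _)
            fun c _ _ => Complex.normSq_nonneg _
      _ = (Fintype.card F : ℝ) * A.card := parseval_B A
  calc (A'.card : ℝ) * ∑ a ∈ A', Complex.normSq (h a)
      ≤ (A'.card : ℝ) * ((Fintype.card F : ℝ) * A.card) := by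
        exact mul_le_mul_of_nonneg_left h3 (Nat.cast_nonneg _)

end Main

def vF {F : Type} [Field F] : F × F × F → F := fun t => t.1 * t.2.1 + t.2.2

section Main2
set_option linter.unusedSectionVars false
variable {F : Type} [Field F] [Fintype F] [DecidableEq F]

lemma energy_bound (A' A : Finset F) (h0 : (0 : F) ∉ A') :
    (Fintype.card F : ℝ) *
        ((((A' ×ˢ A ×ˢ A) ×ˢ (A' ×ˢ A ×ˢ A)).filter
          (fun p => vF p.1 = vF p.2)).card : ℝ)
      ≤ ((A' ×ˢ A ×ˢ A).card : ℝ) ^ 2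
        + (A'.card : ℝ) * (Fintype.card F : ℝ) ^ 2 * (A.card : ℝ) ^ 2 := by
  set T : Finset (F × F × F) := A' ×ˢ A ×ˢ A with hT
  rw [← parseval_count T vF]
  set H : F → ℂ := fun b => ∑ t ∈ T, psiF F (b * vF t) with hH
  set g : F → ℂ := fun b => ∑ y ∈ A, psiF F (b * y) with hg
  have hsplit : ∑ b : F, Complex.normSq (H b)
      = (∑ b ∈ Finset.univ.erase 0, Complex.normSq (H b)) + Complex.normSq (H 0) :=
    (Finset.sum_erase_add _ _ (Finset.mem_univ 0)).symm
  have hH0 : Complex.normSq (H 0) = (T.card : ℝ) ^ 2 := by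
    have : H 0 = (T.card : ℂ) := by
      rw [hH]
      simp only [zero_mul, AddChar.map_zero_eq_one]
      rw [Finset.sum_const, nsmul_eq_mul, mul_one]
    rw [this, Complex.normSq_natCast]
    push_cast; ring
  have hfac : ∀ b : F, H b = (∑ p ∈ A' ×ˢ A, psiF F (b * (p.1 * p.2))) * g b := by
    intro b
    show (∑ t ∈ T, psiF F (b * vF t))
        = (∑ p ∈ A' ×ˢ A, psiF F (b * (p.1 * p.2))) * ∑ y ∈ A, psiF F (b * y)
    rw [hT, Finset.sum_product, Finset.sum_mul_sum, Finset.sum_product]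
    refine Finset.sum_congr rfl fun a _ => ?_
    rw [Finset.sum_product]
    refine Finset.sum_congr rfl fun x _ => Finset.sum_congr rfl fun y _ => ?_
    rw [← AddChar.map_add_eq_mul]
    congr 1
    show b * (a * x + y) = b * (a * x) + b * y
    ring
  have hmain : ∑ b ∈ Finset.univ.erase 0, Complex.normSq (H b)
      ≤ ((A'.card : ℝ) * ((Fintype.card F : ℝ) * A.card)) *
          ∑ b ∈ Finset.univ.erase 0, Complex.normSq (g b) := by
    rw [Finset.mul_sum]
    refine Finset.sum_le_sum fun b hb => ?_
    have hb0 : b ≠ 0 := Finset.ne_of_mem_erase hb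
    rw [hfac b, Complex.normSq_mul]
    exact mul_le_mul_of_nonneg_right (cross_bound A' A hb0) (Complex.normSq_nonneg _)
  have hgsum : ∑ b ∈ Finset.univ.erase 0, Complex.normSq (g b)
      ≤ (Fintype.card F : ℝ) * A.card := by
    rw [← parseval_B A]
    exact Finset.sum_le_sum_of_subset_of_nonneg (Finset.subset_univ _)
      fun c _ _ => Complex.normSq_nonneg _
  have hnn : (0:ℝ) ≤ (A'.card : ℝ) * ((Fintype.card F : ℝ) * A.card) := by positivity
  calc ∑ b : F, Complex.normSq (H b)
      = (∑ b ∈ Finset.univ.erase 0, Complex.normSq (H b)) + Complex.normSq (H 0) := hsplit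
    _ ≤ ((A'.card : ℝ) * ((Fintype.card F : ℝ) * A.card)) *
          ((Fintype.card F : ℝ) * A.card) + (T.card : ℝ) ^ 2 := by
        rw [hH0]
        exact add_le_add_left (hmain.trans (mul_le_mul_of_nonneg_left hgsum hnn)) _
    _ = (T.card : ℝ) ^ 2 + (A'.card : ℝ) * (Fintype.card F : ℝ) ^ 2 * (A.card : ℝ) ^ 2 := by
        ring

end Main2

section Main3
set_option linter.unusedSectionVars false
variable {F : Type} [Field F] [Fintype F] [DecidableEq F]

lemma cs_bound (A' A : Finset F) (hsub : A' ⊆ A) :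
    ((A' ×ˢ A ×ˢ A).card : ℝ) ^ 2
      ≤ (((A ×ˢ A ×ˢ A).image vF).card : ℝ) *
        ((((A' ×ˢ A ×ˢ A) ×ˢ (A' ×ˢ A ×ˢ A)).filter
          (fun p => vF p.1 = vF p.2)).card : ℝ) := by
  set T : Finset (F × F × F) := A' ×ˢ A ×ˢ A with hT
  set S : Finset F := (A ×ˢ A ×ˢ A).image vF with hS
  set n : F → ℕ := fun s => (T.filter (fun t => vF t = s)).card with hn
  have hmem : ∀ t ∈ T, vF t ∈ S := by
    intro t ht
    rw [hS]
    rw [hT, Finset.mem_product, Finset.mem_product] at ht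
    refine Finset.mem_image_of_mem _ ?_
    rw [Finset.mem_product, Finset.mem_product]
    exact ⟨hsub ht.1, ht.2⟩
  have hTcard : T.card = ∑ s ∈ S, n s := Finset.card_eq_sum_card_fiberwise hmem
  have hNcard : ((T ×ˢ T).filter (fun p => vF p.1 = vF p.2)).card = ∑ s : F, (n s) ^ 2 := by
    have h1 : ((T ×ˢ T).filter (fun p => vF p.1 = vF p.2)).card
        = ∑ s : F, (((T ×ˢ T).filter (fun p => vF p.1 = vF p.2)).filter
            (fun p => vF p.1 = s)).card :=
      Finset.card_eq_sum_card_fiberwise (fun p _ => Finset.mem_univ _)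
    rw [h1]
    refine Finset.sum_congr rfl fun s _ => ?_
    have h2 : ((T ×ˢ T).filter (fun p => vF p.1 = vF p.2)).filter (fun p => vF p.1 = s)
        = (T.filter (fun t => vF t = s)) ×ˢ (T.filter (fun t => vF t = s)) := by
      ext p
      simp only [Finset.mem_filter, Finset.mem_product]
      constructor
      · rintro ⟨⟨⟨h3, h4⟩, h5⟩, h6⟩
        exact ⟨⟨h3, h6⟩, h4, h5 ▸ h6⟩
      · rintro ⟨⟨h3, h4⟩, h5, h6⟩
        exact ⟨⟨⟨h3, h5⟩, h4.trans h6.symm⟩, h4⟩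
    rw [h2, Finset.card_product, sq]
  calc ((T.card : ℝ)) ^ 2 = (∑ s ∈ S, (n s : ℝ)) ^ 2 := by
        rw [hTcard]; push_cast; ring
    _ ≤ (S.card : ℝ) * ∑ s ∈ S, (n s : ℝ) ^ 2 := sq_sum_le_card_mul_sum_sq
    _ ≤ (S.card : ℝ) * ∑ s : F, (n s : ℝ) ^ 2 := by
        refine mul_le_mul_of_nonneg_left ?_ (Nat.cast_nonneg _)
        exact Finset.sum_le_sum_of_subset_of_nonneg (Finset.subset_univ _)
          fun s _ _ => by positivity
    _ = (S.card : ℝ) * ((((T ×ˢ T).filter (fun p => vF p.1 = vF p.2)).card : ℝ)) := by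
        rw [hNcard]; push_cast; ring

lemma trivial_bound (A : Finset F) (hA : A.Nonempty) :
    (A.card : ℝ) ≤ (((A ×ˢ A ×ˢ A).image vF).card : ℝ) := by
  obtain ⟨a, ha⟩ := hA
  have : A.card ≤ ((A ×ˢ A ×ˢ A).image vF).card := by
    refine Finset.card_le_card_of_injOn (fun y => a * a + y) ?_ ?_
    · intro y hy
      refine Finset.mem_image.2 ⟨(a, a, y), ?_, rfl⟩
      rw [Finset.mem_product, Finset.mem_product]
      exact ⟨ha, ha, hy⟩
    · intro y _ z _ h
      exact add_left_cancel h
  exact_mod_cast this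

end Main3

section Final
set_option linter.unusedSectionVars false
variable {F : Type} [Field F] [Fintype F] [DecidableEq F]

lemma main_ineq (A : Finset F) (hA : A.Nonempty) :
    (1/4 : ℝ) * min (Fintype.card F : ℝ)
        ((A.card : ℝ) ^ 2 / Real.sqrt (Fintype.card F : ℝ))
      ≤ (((A ×ˢ A ×ˢ A).image vF).card : ℝ) := by
  set q : ℝ := (Fintype.card F : ℝ) with hq
  set u : ℝ := Real.sqrt q with huu
  set k : ℝ := (A.card : ℝ) with hk
  set s : ℝ := (((A ×ˢ A ×ˢ A).image vF).card : ℝ) with hs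
  have hq2 : (2 : ℝ) ≤ q := by
    rw [hq]; exact_mod_cast Fintype.one_lt_card
  have hu : u * u = q := Real.mul_self_sqrt (by linarith)
  have hupos : 0 < u := Real.sqrt_pos.2 (by linarith)
  have hk0 : 0 < k := by rw [hk]; exact_mod_cast hA.card_pos
  have hsk : k ≤ s := trivial_bound A hA
  set m : ℝ := min q (k ^ 2 / u) with hm
  have hm0 : 0 ≤ m := le_min (by linarith) (by positivity)
  by_cases hcase : k ≤ u
  · have h1 : k ^ 2 / u ≤ k := by
      rw [div_le_iff₀ hupos]; nlinarith
    have hmin : m ≤ k := le_trans (min_le_right _ _) h1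
    linarith
  · push_neg at hcase
    have hu1 : 1 < u := by nlinarith
    have hk2 : (2 : ℝ) ≤ k := by
      have h1 : (1:ℝ) < k := lt_trans hu1 hcase
      have h2 : 1 < A.card := by rw [hk] at h1; exact_mod_cast h1
      have h3 : 2 ≤ A.card := h2
      rw [hk]; exact_mod_cast h3
    set A' : Finset F := A.erase 0 with hA'
    set k' : ℝ := (A'.card : ℝ) with hk'
    have hk'1 : k - 1 ≤ k' := by
      have h1 : A.card - 1 ≤ A'.card := Finset.pred_card_le_card_erase
      have h2 : 1 ≤ A.card := hA.card_pos
      have h3 : ((A.card - 1 : ℕ) : ℝ) ≤ ((A'.card : ℕ) : ℝ) := by exact_mod_cast h1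
      rw [Nat.cast_sub h2] at h3
      rw [hk', hk]; exact_mod_cast h3
    have hk'pos : 0 < k' := by linarith
    have hkk' : k ≤ 2 * k' := by linarith
    obtain ⟨a', ha'⟩ : A'.Nonempty := by
      rw [← Finset.card_pos]
      have h4 : (0:ℝ) < (A'.card : ℝ) := by rw [← hk']; exact hk'pos
      exact_mod_cast h4
    have ha'A : a' ∈ A := Finset.mem_of_mem_erase ha'
    have hTc : ((A' ×ˢ A ×ˢ A).card : ℝ) = k' * k * k := by
      rw [Finset.card_product, Finset.card_product]
      push_cast; ring
    set N : ℝ := ((((A' ×ˢ A ×ˢ A) ×ˢ (A' ×ˢ A ×ˢ A)).filter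
        (fun p => vF p.1 = vF p.2)).card : ℝ) with hN
    have hN1 : 1 ≤ N := by
      have htm : (a', a', a') ∈ A' ×ˢ A ×ˢ A := by
        rw [Finset.mem_product]
        exact ⟨ha', Finset.mem_product.2 ⟨ha'A, ha'A⟩⟩
      have hne : (((A' ×ˢ A ×ˢ A) ×ˢ (A' ×ˢ A ×ˢ A)).filter
          (fun p => vF p.1 = vF p.2)).Nonempty :=
        ⟨((a', a', a'), (a', a', a')),
          Finset.mem_filter.2 ⟨Finset.mem_product.2 ⟨htm, htm⟩, rfl⟩⟩
      rw [hN]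
      exact_mod_cast Finset.card_pos.2 hne
    have hNpos : 0 < N := by linarith
    have hE : q * N ≤ (k' * k * k) ^ 2 + k' * q ^ 2 * k ^ 2 := by
      have h5 := energy_bound A' A (Finset.notMem_erase 0 A)
      rw [hTc] at h5
      exact h5
    have hCS : (k' * k * k) ^ 2 ≤ s * N := by
      have h5 := cs_bound A' A (Finset.erase_subset 0 A)
      rw [hTc] at h5
      exact h5
    have hm1 : m ≤ q := min_le_left _ _
    have hm2 : m * u ≤ k ^ 2 := (le_div_iff₀ hupos).mp (min_le_right _ _)
    have hq2u : q ^ 2 = q * u * u := by rw [← hu]; ring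
    have hqpos : (0:ℝ) < q := by linarith
    have hk'nn : (0:ℝ) ≤ k' := le_of_lt hk'pos
    have hknn : (0:ℝ) ≤ k := le_of_lt hk0
    have hunn : (0:ℝ) ≤ u := le_of_lt hupos
    have hqnn : (0:ℝ) ≤ q := le_of_lt hqpos
    have e1 : m * (q * N) ≤ m * ((k' * k * k) ^ 2 + k' * q ^ 2 * k ^ 2) :=
      mul_le_mul_of_nonneg_left hE hm0
    have e2 : m * (k' * k * k) ^ 2 ≤ q * (k' * k * k) ^ 2 := by
      refine mul_le_mul_of_nonneg_right hm1 ?_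
      exact sq_nonneg _
    have e3 : m * (k' * q ^ 2 * k ^ 2) ≤ 2 * q * (k' * k * k) ^ 2 := by
      have hnn1 : (0:ℝ) ≤ k' * q * u * k ^ 2 := by
        refine mul_nonneg (mul_nonneg (mul_nonneg hk'nn hqnn) hunn) (sq_nonneg _)
      have hnn2 : (0:ℝ) ≤ q * (k' * k ^ 2 * k ^ 2) := by
        refine mul_nonneg hqnn (mul_nonneg (mul_nonneg hk'nn (sq_nonneg _)) (sq_nonneg _))
      have hnn3 : (0:ℝ) ≤ q * k' * k ^ 4 := by
        refine mul_nonneg (mul_nonneg hqnn hk'nn) ?_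
        positivity
      have h8 := mul_le_mul_of_nonneg_left hkk' hnn3
      calc m * (k' * q ^ 2 * k ^ 2)
          = (m * u) * (k' * q * u * k ^ 2) := by rw [hq2u]; ring
        _ ≤ k ^ 2 * (k' * q * u * k ^ 2) := mul_le_mul_of_nonneg_right hm2 hnn1
        _ = (q * (k' * k ^ 2 * k ^ 2)) * u := by ring
        _ ≤ (q * (k' * k ^ 2 * k ^ 2)) * k :=
            mul_le_mul_of_nonneg_left (le_of_lt hcase) hnn2
        _ ≤ 2 * q * (k' * k * k) ^ 2 := by linarith only [h8]
    have h6 : q * (m * N) ≤ q * (3 * (k' * k * k) ^ 2) := by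
      linarith only [e1, e2, e3]
    have hmN : m * N ≤ 3 * (k' * k * k) ^ 2 :=
      le_of_mul_le_mul_left h6 hqpos
    have hTnn : (0:ℝ) ≤ (k' * k * k) ^ 2 := sq_nonneg _
    have hfin : (1/4 : ℝ) * m * N ≤ s * N := by
      linarith only [hmN, hCS, hTnn]
    exact le_of_mul_le_mul_right hfin hNpos

end Final

theorem AA_plus_A_bound :
    ∃ c : ℝ, 0 < c ∧
      ∀ (F : Type) (_ : Field F) (_ : Fintype F) (_ : DecidableEq F)
        (A : Finset F), A.Nonempty →
        (c * min (Fintype.card F : ℝ)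
            ((A.card : ℝ) ^ 2 / Real.sqrt (Fintype.card F : ℝ)) ≤
          (((A ×ˢ A ×ˢ A).image (fun t : F × F × F => t.1 * t.2.1 + t.2.2)).card : ℝ)) ∧
        ((Fintype.card F : ℝ) ^ ((3 : ℝ) / 4) ≤ (A.card : ℝ) →
          c * (Fintype.card F : ℝ) ≤
            (((A ×ˢ A ×ˢ A).image (fun t : F × F × F => t.1 * t.2.1 + t.2.2)).card : ℝ)) := by
  refine ⟨1/4, by norm_num, ?_⟩
  intro F fF iF dF A hA
  letI := fF
  letI := iF
  letI := dF
  have himg : (A ×ˢ A ×ˢ A).image (fun t : F × F × F => t.1 * t.2.1 + t.2.2)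
      = (A ×ˢ A ×ˢ A).image vF := rfl
  rw [himg]
  have key := main_ineq A hA
  refine ⟨key, fun h34 => ?_⟩
  set q : ℝ := (Fintype.card F : ℝ) with hq
  have hq2 : (2 : ℝ) ≤ q := by
    rw [hq]; exact_mod_cast Fintype.one_lt_card
  have hq0 : (0:ℝ) ≤ q := by linarith
  have hupos : 0 < Real.sqrt q := Real.sqrt_pos.2 (by linarith)
  have hmin : min q ((A.card : ℝ) ^ 2 / Real.sqrt q) = q := by
    refine min_eq_left ?_
    rw [le_div_iff₀ hupos]
    have h1 : (q ^ ((3:ℝ)/4)) ^ 2 ≤ (A.card : ℝ) ^ 2 := by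
      refine pow_le_pow_left₀ (Real.rpow_nonneg hq0 _) h34 2
    have h2 : (q ^ ((3:ℝ)/4)) ^ 2 = q * Real.sqrt q := by
      rw [← Real.rpow_natCast (q ^ ((3:ℝ)/4)) 2, ← Real.rpow_mul hq0]
      rw [Real.sqrt_eq_rpow]
      rw [show ((3:ℝ)/4 * (2:ℕ) : ℝ) = 1 + 1/2 by norm_num]
      rw [Real.rpow_add (by linarith : (0:ℝ) < q), Real.rpow_one]
    rw [h2] at h1
    linarith
  rw [hmin] at key
  exact key
end

section
/- Let A ⊆ 𝔽_q be nonempty. Then |A(A + A)| ≫ min{ q, |A|² / q^{1/2} } with an absolute implied constant. In particular, if |A| ≥ q^{3/4}, then |A(A + A)| ≫ q. -/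
open Finset

section aux
variable {F : Type} [Field F] [Fintype F] [DecidableEq F]

private lemma aux_sum_N (P : Finset (F × F)) :
    ∑ l : F × F, ((P.filter (fun p => p.2 = l.1 * p.1 + l.2)).card) =
      Fintype.card F * P.card := by
  have h1 : ∀ l : F × F, (P.filter (fun p => p.2 = l.1 * p.1 + l.2)).card =
      ∑ p ∈ P, if p.2 = l.1 * p.1 + l.2 then 1 else 0 := by
    intro l; rw [Finset.card_filter]
  simp only [h1]
  rw [Finset.sum_comm]
  have h2 : ∀ p : F × F, ∑ l : F × F, (if p.2 = l.1 * p.1 + l.2 then 1 else 0) =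
      Fintype.card F := by
    intro p
    rw [Fintype.sum_prod_type]
    have h3 : ∀ m : F, ∑ t : F, (if p.2 = m * p.1 + t then 1 else 0) = 1 := by
      intro m
      have : ∀ t : F, (p.2 = m * p.1 + t) ↔ (t = p.2 - m * p.1) := by
        intro t; constructor
        · intro h; rw [h]; ring
        · intro h; rw [h]; ring
      simp only [this]
      simp
    simp [h3]
  rw [Finset.sum_congr rfl (fun p _ => h2 p)]
  simp [mul_comm]


private lemma aux_card_two_pts (p p' : F × F) (hne : p ≠ p') :
    (Finset.univ.filter (fun l : F × F =>
      p.2 = l.1 * p.1 + l.2 ∧ p'.2 = l.1 * p'.1 + l.2)).card ≤ 1 := by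
  apply Finset.card_le_one.2
  intro l hl l' hl'
  simp only [Finset.mem_filter] at hl hl'
  obtain ⟨-, h1, h2⟩ := hl
  obtain ⟨-, h1', h2'⟩ := hl'
  by_cases hx : p.1 = p'.1
  · exfalso
    apply hne
    have : p.2 = p'.2 := by rw [h1, h2, hx]
    exact Prod.ext hx this
  · have hm : l.1 * (p.1 - p'.1) = p.2 - p'.2 := by rw [h1, h2]; ring
    have hm' : l'.1 * (p.1 - p'.1) = p.2 - p'.2 := by rw [h1', h2']; ring
    have hd : p.1 - p'.1 ≠ 0 := sub_ne_zero.2 hx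
    have e1 : l.1 = l'.1 := by
      have := hm.trans hm'.symm
      exact mul_right_cancel₀ hd this
    have e2 : l.2 = l'.2 := by
      have h12 : l.1 * p.1 + l.2 = l'.1 * p.1 + l'.2 := by rw [← h1, ← h1']
      rw [e1] at h12; exact add_left_cancel h12
    exact Prod.ext e1 e2

private lemma aux_card_one_pt (p : F × F) :
    (Finset.univ.filter (fun l : F × F =>
      p.2 = l.1 * p.1 + l.2 ∧ p.2 = l.1 * p.1 + l.2)).card = Fintype.card F := by
  have : (Finset.univ.filter (fun l : F × F =>
      p.2 = l.1 * p.1 + l.2 ∧ p.2 = l.1 * p.1 + l.2)).card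
      = ∑ l : F × F, if p.2 = l.1 * p.1 + l.2 then 1 else 0 := by
    rw [Finset.card_filter]
    apply Finset.sum_congr rfl
    intro l _; by_cases h : p.2 = l.1 * p.1 + l.2 <;> simp [h]
  rw [this, Fintype.sum_prod_type]
  have h3 : ∀ m : F, ∑ t : F, (if p.2 = m * p.1 + t then 1 else 0) = 1 := by
    intro m
    have he : ∀ t : F, (p.2 = m * p.1 + t) ↔ (t = p.2 - m * p.1) := by
      intro t; constructor
      · intro h; rw [h]; ring
      · intro h; rw [h]; ring
    simp only [he]; simp
  simp [h3]

private lemma aux_sum_N_sq (P : Finset (F × F)) :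
    ∑ l : F × F, ((P.filter (fun p => p.2 = l.1 * p.1 + l.2)).card) ^ 2 ≤
      Fintype.card F * P.card + P.card ^ 2 := by
  have h1 : ∀ l : F × F, ((P.filter (fun p => p.2 = l.1 * p.1 + l.2)).card) ^ 2 =
      ∑ p ∈ P, ∑ p' ∈ P, (if p.2 = l.1 * p.1 + l.2 then 1 else 0) *
        (if p'.2 = l.1 * p'.1 + l.2 then 1 else 0) := by
    intro l
    rw [Finset.card_filter, sq, Finset.sum_mul_sum]
  simp only [h1]
  rw [Finset.sum_comm]
  rw [Finset.sum_congr rfl fun p _ => Finset.sum_comm]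
  have key : ∀ p ∈ P, ∑ p' ∈ P, ∑ l : F × F,
      (if p.2 = l.1 * p.1 + l.2 then 1 else 0) *
        (if p'.2 = l.1 * p'.1 + l.2 then 1 else 0) ≤
      Fintype.card F + P.card := by
    intro p hp
    have h2 : ∀ p' : F × F, ∑ l : F × F,
        (if p.2 = l.1 * p.1 + l.2 then 1 else 0) *
          (if p'.2 = l.1 * p'.1 + l.2 then 1 else 0) =
        (Finset.univ.filter (fun l : F × F =>
          p.2 = l.1 * p.1 + l.2 ∧ p'.2 = l.1 * p'.1 + l.2)).card := by
      intro p'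
      rw [Finset.card_filter]
      apply Finset.sum_congr rfl
      intro l _
      by_cases h : p.2 = l.1 * p.1 + l.2 <;> by_cases h' : p'.2 = l.1 * p'.1 + l.2 <;>
        simp [h, h']
    simp only [h2]
    have hb : ∀ p' ∈ P, (Finset.univ.filter (fun l : F × F =>
          p.2 = l.1 * p.1 + l.2 ∧ p'.2 = l.1 * p'.1 + l.2)).card ≤
        if p' = p then Fintype.card F else 1 := by
      intro p' _
      by_cases h : p' = p
      · subst h; rw [if_pos rfl, aux_card_one_pt]
      · rw [if_neg h]; exact aux_card_two_pts p p' (fun e => h e.symm)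
    calc ∑ p' ∈ P, (Finset.univ.filter (fun l : F × F =>
          p.2 = l.1 * p.1 + l.2 ∧ p'.2 = l.1 * p'.1 + l.2)).card
        ≤ ∑ p' ∈ P, if p' = p then Fintype.card F else 1 := Finset.sum_le_sum hb
      _ ≤ Fintype.card F + P.card := by
          rw [← Finset.add_sum_erase _ _ hp, if_pos rfl]
          have he : ∑ p' ∈ P.erase p, (if p' = p then Fintype.card F else 1) =
              (P.erase p).card := by
            rw [Finset.sum_congr rfl fun x hx => if_neg (Finset.ne_of_mem_erase hx)]
            simp
          rw [he]
          exact Nat.add_le_add_left (le_trans Finset.card_erase_le le_rfl) _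
  calc ∑ p ∈ P, ∑ p' ∈ P, ∑ l : F × F,
      (if p.2 = l.1 * p.1 + l.2 then 1 else 0) *
        (if p'.2 = l.1 * p'.1 + l.2 then 1 else 0)
      ≤ ∑ _p ∈ P, (Fintype.card F + P.card) := Finset.sum_le_sum key
    _ = P.card * (Fintype.card F + P.card) := by rw [Finset.sum_const, smul_eq_mul]
    _ = Fintype.card F * P.card + P.card ^ 2 := by ring


private lemma aux_var (P : Finset (F × F)) :
    ∑ l : F × F, (((P.filter (fun p => p.2 = l.1 * p.1 + l.2)).card : ℝ)
        - P.card / Fintype.card F) ^ 2 ≤ Fintype.card F * P.card := by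
  have hq0 : (0 : ℝ) < Fintype.card F := by
    exact_mod_cast Fintype.card_pos
  set q : ℝ := (Fintype.card F : ℝ) with hqdef
  set c : ℝ := (P.card : ℝ) / q with hcdef
  have hA : ∑ l : F × F, ((P.filter (fun p => p.2 = l.1 * p.1 + l.2)).card : ℝ)
      = q * P.card := by
    rw [hqdef]; exact_mod_cast congrArg (Nat.cast : ℕ → ℝ) (aux_sum_N P)
  have hB : ∑ l : F × F, (((P.filter (fun p => p.2 = l.1 * p.1 + l.2)).card : ℝ)) ^ 2
      ≤ q * P.card + (P.card : ℝ) ^ 2 := by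
    rw [hqdef]; exact_mod_cast aux_sum_N_sq P
  have expand : ∑ l : F × F, (((P.filter (fun p => p.2 = l.1 * p.1 + l.2)).card : ℝ) - c) ^ 2
      = (∑ l : F × F, (((P.filter (fun p => p.2 = l.1 * p.1 + l.2)).card : ℝ)) ^ 2)
        - 2 * c * (∑ l : F × F, ((P.filter (fun p => p.2 = l.1 * p.1 + l.2)).card : ℝ))
        + (q * q) * c ^ 2 := by
    have h : ∀ l : F × F, (((P.filter (fun p => p.2 = l.1 * p.1 + l.2)).card : ℝ) - c) ^ 2
        = (((P.filter (fun p => p.2 = l.1 * p.1 + l.2)).card : ℝ)) ^ 2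
          - 2 * c * ((P.filter (fun p => p.2 = l.1 * p.1 + l.2)).card : ℝ) + c ^ 2 := by
      intro l; ring
    rw [Finset.sum_congr rfl fun l _ => h l, Finset.sum_add_distrib,
      Finset.sum_sub_distrib, ← Finset.mul_sum, Finset.sum_const]
    have : ((Finset.univ : Finset (F × F)).card : ℝ) = q * q := by
      rw [Finset.card_univ, Fintype.card_prod]; push_cast; rfl
    rw [nsmul_eq_mul, this]
  rw [expand, hA]
  have h1 : 2 * c * (q * P.card) = 2 * (P.card : ℝ) ^ 2 := by
    rw [hcdef]; field_simp
  have h2 : (q * q) * c ^ 2 = (P.card : ℝ) ^ 2 := by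
    rw [hcdef]; field_simp
  rw [h1, h2]
  linarith [hB]


private lemma aux_key (A : Finset F) :
    (((A.erase 0).card : ℝ) * A.card * A.card) ≤
      (((A.erase 0).card : ℝ) * A.card) *
        ((A.card * ((A ×ˢ A ×ˢ A).image (fun t : F × F × F => t.1 * (t.2.1 + t.2.2))).card)
          / (Fintype.card F : ℝ))
      + Real.sqrt ((((A.erase 0).card : ℝ) * A.card) *
          ((Fintype.card F : ℝ) *
            (A.card * ((A ×ˢ A ×ˢ A).image (fun t : F × F × F => t.1 * (t.2.1 + t.2.2))).card))) := by
  classical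
  set S : Finset F := (A ×ˢ A ×ˢ A).image (fun t : F × F × F => t.1 * (t.2.1 + t.2.2)) with hS
  set P : Finset (F × F) := A ×ˢ S with hP
  set L : Finset (F × F) := (A.erase 0 ×ˢ A).image (fun p : F × F => (p.1, p.1 * p.2)) with hL
  set N : F × F → ℕ := fun l => (P.filter (fun p => p.2 = l.1 * p.1 + l.2)).card with hN
  have hq0 : (0 : ℝ) < Fintype.card F := by exact_mod_cast Fintype.card_pos
  have hPcard : (P.card : ℝ) = A.card * S.card := by
    rw [hP, Finset.card_product]; push_cast; ring
  -- injectivity of the line parametrization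
  have hinj : Set.InjOn (fun p : F × F => (p.1, p.1 * p.2)) (A.erase 0 ×ˢ A : Finset (F × F)) := by
    intro x hx y hy hxy
    simp only [Finset.mem_coe, Finset.mem_product, Finset.mem_erase] at hx hy
    have hxy' : (x.1, x.1 * x.2) = (y.1, y.1 * y.2) := hxy
    simp only [Prod.mk.injEq] at hxy'
    obtain ⟨h1, h2⟩ := hxy'
    rw [h1] at h2
    have h3 : x.2 = y.2 := mul_left_cancel₀ hy.1.1 h2
    exact Prod.ext h1 h3
  have hLcard : (L.card : ℕ) = (A.erase 0).card * A.card := by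
    rw [hL, Finset.card_image_of_injOn hinj, Finset.card_product]
  -- each line contains at least A.card points of P
  have hline : ∀ x : F × F, x ∈ A.erase 0 ×ˢ A → A.card ≤ N (x.1, x.1 * x.2) := by
    intro x hx
    simp only [Finset.mem_product, Finset.mem_erase] at hx
    obtain ⟨⟨ha0, haA⟩, hcA⟩ := hx
    have : A.card ≤ ((P.filter (fun p => p.2 = x.1 * p.1 + x.1 * x.2)).card) := by
      apply Finset.card_le_card_of_injOn (fun b => (b, x.1 * b + x.1 * x.2))
      · intro b hb
        simp only [Finset.mem_coe, Finset.mem_filter, hP, Finset.mem_product]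
        refine ⟨⟨hb, ?_⟩, trivial⟩
        rw [hS]
        apply Finset.mem_image.2
        exact ⟨(x.1, b, x.2), by simp [Finset.mem_product, haA, Finset.mem_coe.1 hb, hcA], by ring⟩
      · intro b _ b' _ h
        exact congrArg Prod.fst h
    exact this
  -- lower bound for the incidence sum
  have hI : ((A.erase 0).card * A.card * A.card : ℕ) ≤ ∑ l ∈ L, N l := by
    rw [hL, Finset.sum_image hinj]
    calc (A.erase 0).card * A.card * A.card
        = ∑ _x ∈ A.erase 0 ×ˢ A, A.card := by
          rw [Finset.sum_const, Finset.card_product, smul_eq_mul]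
      _ ≤ ∑ x ∈ A.erase 0 ×ˢ A, N (x.1, x.1 * x.2) := Finset.sum_le_sum hline
  -- Cauchy-Schwarz and the variance bound
  set c : ℝ := (P.card : ℝ) / (Fintype.card F : ℝ) with hc
  have hdev : ∑ l ∈ L, ((N l : ℝ) - c) ≤
      Real.sqrt ((L.card : ℝ) * ((Fintype.card F : ℝ) * P.card)) := by
    have hCS : (∑ l ∈ L, ((N l : ℝ) - c)) ^ 2 ≤
        (L.card : ℝ) * ∑ l ∈ L, ((N l : ℝ) - c) ^ 2 := by
      exact sq_sum_le_card_mul_sum_sq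
    have hext : ∑ l ∈ L, ((N l : ℝ) - c) ^ 2 ≤
        ∑ l : F × F, ((N l : ℝ) - c) ^ 2 :=
      Finset.sum_le_univ_sum_of_nonneg (fun l => sq_nonneg _)
    have hvar := aux_var P
    have h2 : (∑ l ∈ L, ((N l : ℝ) - c)) ^ 2 ≤
        (L.card : ℝ) * ((Fintype.card F : ℝ) * P.card) := by
      calc (∑ l ∈ L, ((N l : ℝ) - c)) ^ 2
          ≤ (L.card : ℝ) * ∑ l ∈ L, ((N l : ℝ) - c) ^ 2 := hCS
        _ ≤ (L.card : ℝ) * ∑ l : F × F, ((N l : ℝ) - c) ^ 2 := by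
            apply mul_le_mul_of_nonneg_left hext (by positivity)
        _ ≤ (L.card : ℝ) * ((Fintype.card F : ℝ) * P.card) := by
            apply mul_le_mul_of_nonneg_left hvar (by positivity)
    calc ∑ l ∈ L, ((N l : ℝ) - c)
        ≤ |∑ l ∈ L, ((N l : ℝ) - c)| := le_abs_self _
      _ = Real.sqrt ((∑ l ∈ L, ((N l : ℝ) - c)) ^ 2) := (Real.sqrt_sq_eq_abs _).symm
      _ ≤ Real.sqrt ((L.card : ℝ) * ((Fintype.card F : ℝ) * P.card)) :=
          Real.sqrt_le_sqrt h2
  have hsum : (∑ l ∈ L, (N l : ℝ)) = (∑ l ∈ L, ((N l : ℝ) - c)) + L.card * c := by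
    rw [Finset.sum_sub_distrib, Finset.sum_const, nsmul_eq_mul]; ring
  have hIR : (((A.erase 0).card : ℝ) * A.card * A.card) ≤ ∑ l ∈ L, (N l : ℝ) := by
    have := hI
    calc (((A.erase 0).card : ℝ) * A.card * A.card)
        = (((A.erase 0).card * A.card * A.card : ℕ) : ℝ) := by push_cast; ring
      _ ≤ ((∑ l ∈ L, N l : ℕ) : ℝ) := by exact_mod_cast this
      _ = ∑ l ∈ L, (N l : ℝ) := by push_cast; rfl
  have hLR : (L.card : ℝ) = ((A.erase 0).card : ℝ) * A.card := by
    rw [hLcard]; push_cast; ring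
  calc (((A.erase 0).card : ℝ) * A.card * A.card)
      ≤ ∑ l ∈ L, (N l : ℝ) := hIR
    _ = (∑ l ∈ L, ((N l : ℝ) - c)) + L.card * c := hsum
    _ ≤ Real.sqrt ((L.card : ℝ) * ((Fintype.card F : ℝ) * P.card)) + L.card * c := by
        linarith [hdev]
    _ = (((A.erase 0).card : ℝ) * A.card) *
          ((A.card * S.card) / (Fintype.card F : ℝ))
        + Real.sqrt ((((A.erase 0).card : ℝ) * A.card) *
            ((Fintype.card F : ℝ) * (A.card * S.card))) := by
        rw [hLR, hc, hPcard]; ring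

end aux

set_option maxHeartbeats 1600000 in
theorem A_mul_A_plus_A_bound :
    ∃ c : ℝ, 0 < c ∧
      ∀ (F : Type) (_ : Field F) (_ : Fintype F) (_ : DecidableEq F)
        (A : Finset F), A.Nonempty →
        (c * min (Fintype.card F : ℝ)
            ((A.card : ℝ) ^ 2 / Real.sqrt (Fintype.card F : ℝ)) ≤
          (((A ×ˢ A ×ˢ A).image (fun t : F × F × F => t.1 * (t.2.1 + t.2.2))).card : ℝ)) ∧
        ((Fintype.card F : ℝ) ^ ((3 : ℝ) / 4) ≤ (A.card : ℝ) →
          c * (Fintype.card F : ℝ) ≤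
            (((A ×ˢ A ×ˢ A).image (fun t : F × F × F => t.1 * (t.2.1 + t.2.2))).card : ℝ)) := by
  refine ⟨1/8, by norm_num, ?_⟩
  intro F _ _ _ A hA
  set S : Finset F := (A ×ˢ A ×ˢ A).image (fun t : F × F × F => t.1 * (t.2.1 + t.2.2)) with hS
  set q : ℝ := (Fintype.card F : ℝ) with hq
  set n : ℝ := (A.card : ℝ) with hn
  set s : ℝ := (S.card : ℝ) with hs
  have hq2 : (2 : ℝ) ≤ q := by
    rw [hq]; exact_mod_cast Fintype.one_lt_card
  have hq0 : (0 : ℝ) < q := by linarith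
  have hsq0 : (0 : ℝ) < Real.sqrt q := Real.sqrt_pos.2 hq0
  have hsq1 : (1 : ℝ) ≤ Real.sqrt q := by
    have := Real.sqrt_le_sqrt (le_trans one_le_two hq2 : (1:ℝ) ≤ q)
    simpa using this
  have hn1 : (1 : ℝ) ≤ n := by
    rw [hn]; exact_mod_cast Finset.card_pos.2 hA
  -- S is nonempty
  have hSne : S.Nonempty := by
    obtain ⟨a, ha⟩ := hA
    exact ⟨a * (a + a), Finset.mem_image.2 ⟨(a, a, a), by simp [Finset.mem_product, ha], rfl⟩⟩
  have hs1 : (1 : ℝ) ≤ s := by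
    rw [hs]; exact_mod_cast Finset.card_pos.2 hSne
  -- trivial bound: if A has a nonzero element, s ≥ n
  have htriv : ∀ a ∈ A, a ≠ 0 → n ≤ s := by
    intro a haA ha0
    rw [hn, hs]
    have : A.card ≤ S.card := by
      apply Finset.card_le_card_of_injOn (fun b => a * (b + a))
      · intro b hb
        exact Finset.mem_image.2 ⟨(a, b, a), by simp [Finset.mem_product, haA, Finset.mem_coe.1 hb], rfl⟩
      · intro b _ b' _ h
        have := mul_left_cancel₀ ha0 h
        exact add_right_cancel this
    exact_mod_cast this
  -- main part 1
  have part1 : (1/8 : ℝ) * min q (n ^ 2 / Real.sqrt q) ≤ s := by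
    have hminq : min q (n ^ 2 / Real.sqrt q) ≤ q := min_le_left _ _
    have hminn : min q (n ^ 2 / Real.sqrt q) ≤ n ^ 2 / Real.sqrt q := min_le_right _ _
    have hmin0 : 0 ≤ min q (n ^ 2 / Real.sqrt q) := by
      apply le_min (le_of_lt hq0)
      positivity
    by_cases hcase : n ≤ Real.sqrt q
    · -- small A
      by_cases hone : A.card ≤ 1
      · have hn1' : n = 1 := by
          rw [hn]
          have : A.card = 1 := le_antisymm hone (Finset.card_pos.2 hA)
          rw [this]; norm_num
        have : n ^ 2 / Real.sqrt q ≤ 1 := by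
          rw [hn1']
          rw [div_le_one hsq0]; simpa using hsq1
        nlinarith
      · -- A has at least 2 elements, so a nonzero element
        push_neg at hone
        obtain ⟨a, haA, ha0⟩ : ∃ a ∈ A, a ≠ 0 := by
          by_contra hcon
          push_neg at hcon
          have : A ⊆ {0} := fun x hx => Finset.mem_singleton.2 (hcon x hx)
          have := Finset.card_le_card this
          simp at this
          omega
        have hns : n ≤ s := htriv a haA ha0
        have : n ^ 2 / Real.sqrt q ≤ n := by
          rw [div_le_iff₀ hsq0]
          nlinarith
        nlinarith
    · -- large A : n > sqrt q
      push_neg at hcase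
      have hn2 : (2 : ℝ) ≤ n := by
        have h1 : (1 : ℝ) < n := lt_of_le_of_lt hsq1 hcase
        rw [hn] at h1 ⊢
        exact_mod_cast Nat.succ_le_of_lt (by exact_mod_cast h1)
      set n₀ : ℝ := ((A.erase 0).card : ℝ) with hn₀
      have hn₀half : n / 2 ≤ n₀ := by
        have hle : A.card ≤ (A.erase 0).card + 1 := by
          by_cases h0 : (0 : F) ∈ A
          · rw [Finset.card_erase_add_one h0]
          · rw [Finset.erase_eq_of_notMem h0]; omega
        have : n ≤ n₀ + 1 := by rw [hn, hn₀]; exact_mod_cast hle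
        linarith
      have hn₀1 : (1 : ℝ) ≤ n₀ := by linarith
      have hn₀pos : (0 : ℝ) < n₀ := lt_of_lt_of_le one_pos hn₀1
      have hnpos : (0 : ℝ) < n := by linarith
      have hkey := aux_key A
      rw [← hS, ← hq, ← hn, ← hs, ← hn₀] at hkey
      by_cases hbig : q ≤ 2 * s
      · linarith
      · push_neg at hbig
        have hterm : n₀ * n * (n * s / q) ≤ n₀ * n * n / 2 := by
          have h1 : n * s / q ≤ n / 2 := by
            rw [div_le_div_iff₀ hq0 (by norm_num : (0:ℝ) < 2)]
            nlinarith
          have h2 : (0 : ℝ) ≤ n₀ * n := by positivity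
          calc n₀ * n * (n * s / q) ≤ n₀ * n * (n / 2) :=
                mul_le_mul_of_nonneg_left h1 h2
            _ = n₀ * n * n / 2 := by ring
        have hhalf : n₀ * n * n / 2 ≤ Real.sqrt (n₀ * n * (q * (n * s))) := by
          linarith
        have hsqb : (n₀ * n * n / 2) ^ 2 ≤ n₀ * n * (q * (n * s)) := by
          have h0 : (0 : ℝ) ≤ n₀ * n * n / 2 := by
            have := mul_pos (mul_pos hn₀pos hnpos) hnpos; linarith
          calc (n₀ * n * n / 2) ^ 2
              ≤ Real.sqrt (n₀ * n * (q * (n * s))) ^ 2 :=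
                pow_le_pow_left₀ h0 hhalf 2
            _ = n₀ * n * (q * (n * s)) := Real.sq_sqrt
                (mul_nonneg (mul_nonneg hn₀pos.le hnpos.le)
                  (mul_nonneg hq0.le (mul_nonneg hnpos.le (by linarith : (0:ℝ) ≤ s))))
        have hxpos : (0 : ℝ) < n₀ * n ^ 2 := mul_pos hn₀pos (pow_pos hnpos 2)
        have hs_low : n₀ * n ^ 2 ≤ 4 * (q * s) := by nlinarith [hsqb, hxpos]
        have hfin : n ^ 2 ≤ 8 * (Real.sqrt q * s) := by
          have hqs : Real.sqrt q * Real.sqrt q = q := Real.mul_self_sqrt hq0.le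
          have ha : n ^ 2 * Real.sqrt q ≤ n ^ 2 * n :=
            mul_le_mul_of_nonneg_left hcase.le (sq_nonneg n)
          have hb : n ^ 2 * n ≤ n ^ 2 * (2 * n₀) :=
            mul_le_mul_of_nonneg_left (by linarith) (sq_nonneg n)
          have hc : n ^ 2 * Real.sqrt q ≤ 8 * (Real.sqrt q * s) * Real.sqrt q := by
            calc n ^ 2 * Real.sqrt q ≤ n ^ 2 * (2 * n₀) := le_trans ha hb
              _ = 2 * (n₀ * n ^ 2) := by ring
              _ ≤ 2 * (4 * (q * s)) := by linarith
              _ = 8 * (Real.sqrt q * s) * Real.sqrt q := by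
                  linear_combination (-8 * s) * hqs
          exact le_of_mul_le_mul_right hc hsq0
        have hdiv : n ^ 2 / Real.sqrt q ≤ 8 * s := by
          rw [div_le_iff₀ hsq0]
          nlinarith [hfin, hsq0]
        linarith
  refine ⟨part1, ?_⟩
  · intro h34
    have hq34 : q ≤ n ^ 2 / Real.sqrt q := by
      rw [le_div_iff₀ hsq0]
      have hsqrt : Real.sqrt q = q ^ ((1:ℝ)/2) := Real.sqrt_eq_rpow q
      have h2 : q ^ ((3:ℝ)/4) * q ^ ((3:ℝ)/4) = q ^ ((3:ℝ)/2) := by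
        rw [← Real.rpow_add hq0]; norm_num
      have h3 : q * Real.sqrt q = q ^ ((3:ℝ)/2) := by
        rw [hsqrt]
        rw [show q * q ^ ((1:ℝ)/2) = q ^ (1:ℝ) * q ^ ((1:ℝ)/2) from by rw [Real.rpow_one]]
        rw [← Real.rpow_add hq0]; norm_num
      have h4 : q ^ ((3:ℝ)/4) ≤ n := h34
      have h5 : (0:ℝ) ≤ q ^ ((3:ℝ)/4) := le_of_lt (Real.rpow_pos_of_pos hq0 _)
      calc q * Real.sqrt q = q ^ ((3:ℝ)/2) := h3
        _ = q ^ ((3:ℝ)/4) * q ^ ((3:ℝ)/4) := h2.symm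
        _ ≤ n * n := mul_le_mul h4 h4 h5 (by linarith)
        _ = n ^ 2 := by ring
    have : min q (n ^ 2 / Real.sqrt q) = q := min_eq_left hq34
    rw [this] at part1
    exact part1
end

section
/- Let q = p^l be a prime power and A ⊆ 𝔽_q with |A| ≥ q^{3/4}. Then there is an absolute constant c > 0 such that |{a₁a₂ + a₃ : aᵢ ∈ A}| ≥ c·q and |{a₁(a₂ + a₃) : aᵢ ∈ A}| ≥ c·q. -/
open Finset Complex

namespace SumProdAux

variable {F : Type} [Field F] [Fintype F] [DecidableEq F]

/-- For nontrivial ψ, `∑_{a:F} ‖∑_{b∈A} ψ (a*b)‖² = q * |A|`. -/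
lemma sum_sq_norm (A : Finset F) {ψ : AddChar F ℂ} (hψ : ψ ≠ 1) :
    ∑ a : F, ‖∑ b ∈ A, ψ (a * b)‖ ^ 2 = (Fintype.card F : ℝ) * A.card := by
  have key : ∑ a : F, (∑ b ∈ A, ψ (a * b)) * (starRingEnd ℂ) (∑ c ∈ A, ψ (a * c))
      = (Fintype.card F : ℂ) * A.card := by
    have h1 : ∀ a : F, (∑ b ∈ A, ψ (a * b)) * (starRingEnd ℂ) (∑ c ∈ A, ψ (a * c))
        = ∑ b ∈ A, ∑ c ∈ A, ψ (a * (b - c)) := by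
      intro a
      rw [map_sum, Finset.sum_mul_sum]
      refine Finset.sum_congr rfl fun b _ => Finset.sum_congr rfl fun c _ => ?_
      rw [← AddChar.map_neg_eq_conj, ← AddChar.map_add_eq_mul]
      ring_nf
    simp_rw [h1]
    calc ∑ a : F, ∑ b ∈ A, ∑ c ∈ A, ψ (a * (b - c))
        = ∑ b ∈ A, ∑ a : F, ∑ c ∈ A, ψ (a * (b - c)) := Finset.sum_comm
      _ = ∑ b ∈ A, ∑ c ∈ A, ∑ a : F, ψ (a * (b - c)) :=
          Finset.sum_congr rfl fun b _ => Finset.sum_comm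
      _ = ∑ b ∈ A, ∑ c ∈ A, if (b - c : F) = 0 then (Fintype.card F : ℂ) else 0 := by
          refine Finset.sum_congr rfl fun b _ => Finset.sum_congr rfl fun c _ => ?_
          rw [AddChar.sum_mulShift _ (AddChar.IsPrimitive.of_ne_one hψ)]
          split <;> simp
      _ = ∑ b ∈ A, ∑ c ∈ A, if c = b then (Fintype.card F : ℂ) else 0 := by
          refine Finset.sum_congr rfl fun b _ => Finset.sum_congr rfl fun c _ => ?_
          congr 1
          simp [sub_eq_zero, eq_comm]
      _ = ∑ b ∈ A, if b ∈ A then (Fintype.card F : ℂ) else 0 := by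
          refine Finset.sum_congr rfl fun b hb => ?_
          rw [Finset.sum_ite_eq' A b fun _ => (Fintype.card F : ℂ)]
      _ = (Fintype.card F : ℂ) * A.card := by
          rw [Finset.sum_congr rfl fun b hb => if_pos hb]
          simp [mul_comm]
  have key2 : ((∑ a : F, ‖∑ b ∈ A, ψ (a * b)‖ ^ 2 : ℝ) : ℂ)
      = (((Fintype.card F : ℝ) * A.card : ℝ) : ℂ) := by
    push_cast
    rw [← key]
    exact Finset.sum_congr rfl fun a _ => (Complex.mul_conj' _).symm
  exact_mod_cast key2


/-- Parseval over the dual group: `q * #{(t,u) : f t = f u} = ∑_ψ ‖∑_t ψ(f t)‖²`. -/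
lemma parseval {ι : Type} (T : Finset ι) (f : ι → F) :
    (Fintype.card F : ℝ) * (∑ t ∈ T, ∑ u ∈ T, if f t = f u then (1 : ℝ) else 0)
      = ∑ ψ : AddChar F ℂ, ‖∑ t ∈ T, ψ (f t)‖ ^ 2 := by
  have key : ∑ ψ : AddChar F ℂ, (∑ t ∈ T, ψ (f t)) * (starRingEnd ℂ) (∑ u ∈ T, ψ (f u))
      = (Fintype.card F : ℂ) * (∑ t ∈ T, ∑ u ∈ T, if f t = f u then (1 : ℂ) else 0) := by
    have h1 : ∀ ψ : AddChar F ℂ, (∑ t ∈ T, ψ (f t)) * (starRingEnd ℂ) (∑ u ∈ T, ψ (f u))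
        = ∑ t ∈ T, ∑ u ∈ T, ψ (f t - f u) := by
      intro ψ
      rw [map_sum, Finset.sum_mul_sum]
      refine Finset.sum_congr rfl fun t _ => Finset.sum_congr rfl fun u _ => ?_
      rw [← AddChar.map_neg_eq_conj, ← AddChar.map_add_eq_mul, sub_eq_add_neg]
    simp_rw [h1]
    calc ∑ ψ : AddChar F ℂ, ∑ t ∈ T, ∑ u ∈ T, ψ (f t - f u)
        = ∑ t ∈ T, ∑ ψ : AddChar F ℂ, ∑ u ∈ T, ψ (f t - f u) := Finset.sum_comm
      _ = ∑ t ∈ T, ∑ u ∈ T, ∑ ψ : AddChar F ℂ, ψ (f t - f u) :=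
          Finset.sum_congr rfl fun t _ => Finset.sum_comm
      _ = ∑ t ∈ T, ∑ u ∈ T, if f t = f u then (Fintype.card F : ℂ) else 0 := by
          refine Finset.sum_congr rfl fun t _ => Finset.sum_congr rfl fun u _ => ?_
          rw [AddChar.sum_apply_eq_ite]
          congr 1
          simp [sub_eq_zero]
      _ = (Fintype.card F : ℂ) * (∑ t ∈ T, ∑ u ∈ T, if f t = f u then (1 : ℂ) else 0) := by
          rw [Finset.mul_sum]
          refine Finset.sum_congr rfl fun t _ => ?_
          rw [Finset.mul_sum]
          refine Finset.sum_congr rfl fun u _ => ?_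
          split <;> simp
  have key2 : (((Fintype.card F : ℝ) *
        (∑ t ∈ T, ∑ u ∈ T, if f t = f u then (1 : ℝ) else 0) : ℝ) : ℂ)
      = ((∑ ψ : AddChar F ℂ, ‖∑ t ∈ T, ψ (f t)‖ ^ 2 : ℝ) : ℂ) := by
    push_cast [apply_ite ((↑·) : ℝ → ℂ)]
    rw [← key]
    exact Finset.sum_congr rfl fun ψ _ => Complex.mul_conj' _
  exact_mod_cast key2


lemma charsum (A : Finset F) :
    ∑ ψ : AddChar F ℂ, ‖∑ c ∈ A, ψ c‖ ^ 2 = (Fintype.card F : ℝ) * A.card := by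
  have h := (parseval A (id : F → F)).symm
  simp only [id] at h
  rw [h]
  congr 1
  calc ∑ t ∈ A, ∑ u ∈ A, (if t = u then (1:ℝ) else 0)
      = ∑ t ∈ A, if t ∈ A then (1:ℝ) else 0 :=
        Finset.sum_congr rfl fun t _ => Finset.sum_ite_eq A t fun _ => (1:ℝ)
    _ = (A.card : ℝ) := by
        rw [Finset.sum_congr rfl fun t ht => if_pos ht]; simp

lemma cauchy_count {ι : Type} (T : Finset ι) (f : ι → F) :
    (T.card : ℝ) ^ 2 ≤ ((T.image f).card : ℝ)
      * ∑ t ∈ T, ∑ u ∈ T, (if f t = f u then (1:ℝ) else 0) := by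
  set n : F → ℝ := fun x => ((T.filter fun t => f t = x).card : ℝ) with hn
  have h1 : (T.card : ℝ) = ∑ x ∈ T.image f, n x := by
    rw [Finset.card_eq_sum_card_image f T]
    push_cast
    rfl
  have h2 : ∑ t ∈ T, ∑ u ∈ T, (if f t = f u then (1:ℝ) else 0)
      = ∑ x ∈ T.image f, n x ^ 2 := by
    have hinner : ∀ t ∈ T, ∑ u ∈ T, (if f t = f u then (1:ℝ) else 0) = n (f t) := by
      intro t _
      rw [Finset.sum_boole, hn]
      congr 2
      exact Finset.filter_congr fun u _ => by rw [eq_comm]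
    rw [Finset.sum_congr rfl hinner, Finset.sum_comp n f]
    refine Finset.sum_congr rfl fun x _ => ?_
    rw [nsmul_eq_mul, hn, sq]
  rw [h1, h2]
  exact sq_sum_le_card_mul_sum_sq


lemma key_bound {ι : Type} (T : Finset ι) (f : ι → F) (hT : 0 < (T.card : ℝ))
    (hS : ∑ ψ : AddChar F ℂ, ‖∑ t ∈ T, ψ (f t)‖ ^ 2 ≤ 2 * (T.card : ℝ) ^ 2) :
    (1/2 : ℝ) * (Fintype.card F : ℝ) ≤ ((T.image f).card : ℝ) := by
  set q : ℝ := (Fintype.card F : ℝ) with hq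
  have hq0 : 0 ≤ q := Nat.cast_nonneg _
  have h1 := cauchy_count T f
  have h2 := parseval T f
  have h3 : q * (T.card : ℝ) ^ 2 ≤ ((T.image f).card : ℝ)
      * ∑ ψ : AddChar F ℂ, ‖∑ t ∈ T, ψ (f t)‖ ^ 2 := by
    calc q * (T.card : ℝ) ^ 2
        ≤ q * (((T.image f).card : ℝ)
            * ∑ t ∈ T, ∑ u ∈ T, (if f t = f u then (1:ℝ) else 0)) :=
          mul_le_mul_of_nonneg_left h1 hq0
      _ = ((T.image f).card : ℝ)
            * (q * ∑ t ∈ T, ∑ u ∈ T, (if f t = f u then (1:ℝ) else 0)) := by ring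
      _ = _ := by rw [h2]
  have hS0 : (0:ℝ) ≤ ((T.image f).card : ℝ) := Nat.cast_nonneg _
  have h4 : q * (T.card : ℝ) ^ 2 ≤ ((T.image f).card : ℝ) * (2 * (T.card : ℝ) ^ 2) :=
    h3.trans (mul_le_mul_of_nonneg_left hS hS0)
  nlinarith [h4, hT, mul_pos hT hT]

/-- Factorization and bound for the `a*b + c` case, nontrivial character. -/
lemma case1_char_bound (A : Finset F) {ψ : AddChar F ℂ} (hψ : ψ ≠ 1) :
    ‖∑ t ∈ A ×ˢ A ×ˢ A, ψ (t.1 * t.2.1 + t.2.2)‖ ^ 2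
      ≤ (Fintype.card F : ℝ) * (A.card : ℝ) ^ 2 * ‖∑ c ∈ A, ψ c‖ ^ 2 := by
  have hfact : ∑ t ∈ A ×ˢ A ×ˢ A, ψ (t.1 * t.2.1 + t.2.2)
      = (∑ a ∈ A, ∑ b ∈ A, ψ (a * b)) * (∑ c ∈ A, ψ c) := by
    rw [Finset.sum_product]
    rw [Finset.sum_mul]
    refine Finset.sum_congr rfl fun a _ => ?_
    rw [Finset.sum_product, Finset.sum_mul]
    refine Finset.sum_congr rfl fun b _ => ?_
    rw [Finset.mul_sum]
    exact Finset.sum_congr rfl fun c _ => AddChar.map_add_eq_mul ψ _ _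
  rw [hfact, norm_mul, mul_pow]
  refine mul_le_mul_of_nonneg_right ?_ (by positivity)
  -- ‖∑ a ∑ b ψ(ab)‖² ≤ q |A|²
  have hnorm : ‖∑ a ∈ A, ∑ b ∈ A, ψ (a * b)‖ ≤ ∑ a ∈ A, ‖∑ b ∈ A, ψ (a * b)‖ :=
    norm_sum_le _ _
  have hCS : (∑ a ∈ A, ‖∑ b ∈ A, ψ (a * b)‖) ^ 2
      ≤ (A.card : ℝ) * ∑ a ∈ A, ‖∑ b ∈ A, ψ (a * b)‖ ^ 2 := sq_sum_le_card_mul_sum_sq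
  have hext : ∑ a ∈ A, ‖∑ b ∈ A, ψ (a * b)‖ ^ 2 ≤ ∑ a : F, ‖∑ b ∈ A, ψ (a * b)‖ ^ 2 :=
    Finset.sum_le_univ_sum_of_nonneg fun a => by positivity
  calc ‖∑ a ∈ A, ∑ b ∈ A, ψ (a * b)‖ ^ 2
      ≤ (∑ a ∈ A, ‖∑ b ∈ A, ψ (a * b)‖) ^ 2 := by
        refine pow_le_pow_left₀ (norm_nonneg _) hnorm 2
    _ ≤ (A.card : ℝ) * ∑ a ∈ A, ‖∑ b ∈ A, ψ (a * b)‖ ^ 2 := hCS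
    _ ≤ (A.card : ℝ) * ∑ a : F, ‖∑ b ∈ A, ψ (a * b)‖ ^ 2 :=
        mul_le_mul_of_nonneg_left hext (Nat.cast_nonneg _)
    _ = (Fintype.card F : ℝ) * (A.card : ℝ) ^ 2 := by
        rw [sum_sq_norm A hψ]; ring

/-- Bound for the `a*(b+c)` case, nontrivial character. -/
lemma case2_char_bound (A : Finset F) {ψ : AddChar F ℂ} (hψ : ψ ≠ 1) :
    ‖∑ t ∈ A ×ˢ A ×ˢ A, ψ (t.1 * (t.2.1 + t.2.2))‖ ^ 2
      ≤ ((Fintype.card F : ℝ) * (A.card : ℝ)) ^ 2 := by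
  have hfact : ∑ t ∈ A ×ˢ A ×ˢ A, ψ (t.1 * (t.2.1 + t.2.2))
      = ∑ a ∈ A, (∑ b ∈ A, ψ (a * b)) * (∑ c ∈ A, ψ (a * c)) := by
    rw [Finset.sum_product]
    refine Finset.sum_congr rfl fun a _ => ?_
    rw [Finset.sum_product, Finset.sum_mul_sum]
    refine Finset.sum_congr rfl fun b _ => Finset.sum_congr rfl fun c _ => ?_
    rw [← AddChar.map_add_eq_mul, mul_add]
  have hb : ‖∑ t ∈ A ×ˢ A ×ˢ A, ψ (t.1 * (t.2.1 + t.2.2))‖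
      ≤ (Fintype.card F : ℝ) * (A.card : ℝ) := by
    rw [hfact]
    calc ‖∑ a ∈ A, (∑ b ∈ A, ψ (a * b)) * (∑ c ∈ A, ψ (a * c))‖
        ≤ ∑ a ∈ A, ‖(∑ b ∈ A, ψ (a * b)) * (∑ c ∈ A, ψ (a * c))‖ := norm_sum_le _ _
      _ = ∑ a ∈ A, ‖∑ b ∈ A, ψ (a * b)‖ ^ 2 := by
          refine Finset.sum_congr rfl fun a _ => ?_
          rw [norm_mul, sq]
      _ ≤ ∑ a : F, ‖∑ b ∈ A, ψ (a * b)‖ ^ 2 :=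
          Finset.sum_le_univ_sum_of_nonneg fun a => by positivity
      _ = (Fintype.card F : ℝ) * (A.card : ℝ) := sum_sq_norm A hψ
  calc ‖∑ t ∈ A ×ˢ A ×ˢ A, ψ (t.1 * (t.2.1 + t.2.2))‖ ^ 2
      ≤ ((Fintype.card F : ℝ) * (A.card : ℝ)) ^ 2 :=
        pow_le_pow_left₀ (norm_nonneg _) hb 2


lemma case1_total (A : Finset F) (h3 : (Fintype.card F : ℝ) ^ 2 ≤ (A.card : ℝ) ^ 3) :
    ∑ ψ : AddChar F ℂ, ‖∑ t ∈ A ×ˢ A ×ˢ A, ψ (t.1 * t.2.1 + t.2.2)‖ ^ 2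
      ≤ 2 * ((A ×ˢ A ×ˢ A).card : ℝ) ^ 2 := by
  set q : ℝ := (Fintype.card F : ℝ) with hqdef
  have hq0 : 0 ≤ q := Nat.cast_nonneg _
  have hA0 : (0:ℝ) ≤ (A.card : ℝ) := Nat.cast_nonneg _
  have hTcard : ((A ×ˢ A ×ˢ A).card : ℝ) = (A.card : ℝ) ^ 3 := by
    simp [Finset.card_product]; push_cast; ring
  rw [← Finset.add_sum_erase _ _ (Finset.mem_univ (1 : AddChar F ℂ))]
  have htriv : ‖∑ t ∈ A ×ˢ A ×ˢ A, (1 : AddChar F ℂ) (t.1 * t.2.1 + t.2.2)‖ ^ 2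
      = ((A ×ˢ A ×ˢ A).card : ℝ) ^ 2 := by
    simp
  have herase : ∑ ψ ∈ Finset.univ.erase (1 : AddChar F ℂ),
      ‖∑ t ∈ A ×ˢ A ×ˢ A, ψ (t.1 * t.2.1 + t.2.2)‖ ^ 2
      ≤ q * (A.card : ℝ) ^ 2 * (q * (A.card : ℝ)) := by
    calc ∑ ψ ∈ Finset.univ.erase (1 : AddChar F ℂ),
        ‖∑ t ∈ A ×ˢ A ×ˢ A, ψ (t.1 * t.2.1 + t.2.2)‖ ^ 2
        ≤ ∑ ψ ∈ Finset.univ.erase (1 : AddChar F ℂ),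
            q * (A.card : ℝ) ^ 2 * ‖∑ c ∈ A, ψ c‖ ^ 2 :=
          Finset.sum_le_sum fun ψ hψ =>
            case1_char_bound A (Finset.ne_of_mem_erase hψ)
      _ = q * (A.card : ℝ) ^ 2 * ∑ ψ ∈ Finset.univ.erase (1 : AddChar F ℂ),
            ‖∑ c ∈ A, ψ c‖ ^ 2 := by rw [Finset.mul_sum]
      _ ≤ q * (A.card : ℝ) ^ 2 * ∑ ψ : AddChar F ℂ, ‖∑ c ∈ A, ψ c‖ ^ 2 := by
          refine mul_le_mul_of_nonneg_left ?_ (by positivity)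
          exact Finset.sum_le_sum_of_subset_of_nonneg (Finset.erase_subset _ _)
            fun ψ _ _ => by positivity
      _ = q * (A.card : ℝ) ^ 2 * (q * (A.card : ℝ)) := by rw [charsum A]
  have hbound : q * (A.card : ℝ) ^ 2 * (q * (A.card : ℝ)) ≤ ((A ×ˢ A ×ˢ A).card : ℝ) ^ 2 := by
    rw [hTcard]
    calc q * (A.card : ℝ) ^ 2 * (q * (A.card : ℝ)) = q ^ 2 * (A.card : ℝ) ^ 3 := by ring
      _ ≤ (A.card : ℝ) ^ 3 * (A.card : ℝ) ^ 3 := mul_le_mul_of_nonneg_right h3 (by positivity)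
      _ = ((A.card : ℝ) ^ 3) ^ 2 := by ring
  rw [htriv]
  linarith [herase.trans hbound]

lemma case2_total (A : Finset F) (h4 : (Fintype.card F : ℝ) ^ 3 ≤ (A.card : ℝ) ^ 4) :
    ∑ ψ : AddChar F ℂ, ‖∑ t ∈ A ×ˢ A ×ˢ A, ψ (t.1 * (t.2.1 + t.2.2))‖ ^ 2
      ≤ 2 * ((A ×ˢ A ×ˢ A).card : ℝ) ^ 2 := by
  set q : ℝ := (Fintype.card F : ℝ) with hqdef
  have hq0 : 0 ≤ q := Nat.cast_nonneg _
  have hTcard : ((A ×ˢ A ×ˢ A).card : ℝ) = (A.card : ℝ) ^ 3 := by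
    simp [Finset.card_product]; push_cast; ring
  rw [← Finset.add_sum_erase _ _ (Finset.mem_univ (1 : AddChar F ℂ))]
  have htriv : ‖∑ t ∈ A ×ˢ A ×ˢ A, (1 : AddChar F ℂ) (t.1 * (t.2.1 + t.2.2))‖ ^ 2
      = ((A ×ˢ A ×ˢ A).card : ℝ) ^ 2 := by
    simp
  have hcard_erase : ((Finset.univ.erase (1 : AddChar F ℂ)).card : ℝ) ≤ q := by
    have h1 : (Finset.univ.erase (1 : AddChar F ℂ)).card ≤ Fintype.card (AddChar F ℂ) :=
      Finset.card_le_univ _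
    have h2 : Fintype.card (AddChar F ℂ) = Fintype.card F := AddChar.card_eq
    rw [hqdef]
    exact_mod_cast h1.trans_eq h2
  have herase : ∑ ψ ∈ Finset.univ.erase (1 : AddChar F ℂ),
      ‖∑ t ∈ A ×ˢ A ×ˢ A, ψ (t.1 * (t.2.1 + t.2.2))‖ ^ 2
      ≤ q * (q * (A.card : ℝ)) ^ 2 := by
    calc ∑ ψ ∈ Finset.univ.erase (1 : AddChar F ℂ),
        ‖∑ t ∈ A ×ˢ A ×ˢ A, ψ (t.1 * (t.2.1 + t.2.2))‖ ^ 2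
        ≤ ((Finset.univ.erase (1 : AddChar F ℂ)).card : ℝ) * (q * (A.card : ℝ)) ^ 2 := by
          have := Finset.sum_le_card_nsmul (Finset.univ.erase (1 : AddChar F ℂ))
            (fun ψ => ‖∑ t ∈ A ×ˢ A ×ˢ A, ψ (t.1 * (t.2.1 + t.2.2))‖ ^ 2)
            ((q * (A.card : ℝ)) ^ 2)
            (fun ψ hψ => case2_char_bound A (Finset.ne_of_mem_erase hψ))
          simpa [nsmul_eq_mul] using this
      _ ≤ q * (q * (A.card : ℝ)) ^ 2 :=
          mul_le_mul_of_nonneg_right hcard_erase (by positivity)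
  have hbound : q * (q * (A.card : ℝ)) ^ 2 ≤ ((A ×ˢ A ×ˢ A).card : ℝ) ^ 2 := by
    rw [hTcard]
    calc q * (q * (A.card : ℝ)) ^ 2 = q ^ 3 * (A.card : ℝ) ^ 2 := by ring
      _ ≤ (A.card : ℝ) ^ 4 * (A.card : ℝ) ^ 2 := mul_le_mul_of_nonneg_right h4 (by positivity)
      _ = ((A.card : ℝ) ^ 3) ^ 2 := by ring
  rw [htriv]
  linarith [herase.trans hbound]

end SumProdAux

theorem main_corollary :
    ∃ c : ℝ, 0 < c ∧
      ∀ (F : Type) (_ : Field F) (_ : Fintype F) (_ : DecidableEq F)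
        (A : Finset F),
        (Fintype.card F : ℝ) ^ ((3 : ℝ) / 4) ≤ (A.card : ℝ) →
        c * (Fintype.card F : ℝ) ≤
            (((A ×ˢ A ×ˢ A).image (fun t : F × F × F => t.1 * t.2.1 + t.2.2)).card : ℝ) ∧
        c * (Fintype.card F : ℝ) ≤
            (((A ×ˢ A ×ˢ A).image (fun t : F × F × F => t.1 * (t.2.1 + t.2.2))).card : ℝ) := by
  refine ⟨1/2, by norm_num, ?_⟩
  intro F _ _ _ A hA
  set q : ℝ := (Fintype.card F : ℝ) with hqdef
  have hq1 : (1:ℝ) ≤ q := by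
    rw [hqdef]; exact_mod_cast Fintype.card_pos
  have hq0 : (0:ℝ) < q := lt_of_lt_of_le one_pos hq1
  have hA1 : (1:ℝ) ≤ (A.card : ℝ) := by
    refine le_trans ?_ hA
    calc (1:ℝ) = (1:ℝ) ^ ((3:ℝ)/4) := (Real.one_rpow _).symm
      _ ≤ q ^ ((3:ℝ)/4) := Real.rpow_le_rpow (by norm_num) hq1 (by norm_num)
  have hAq : (A.card : ℝ) ≤ q := by
    rw [hqdef]; exact_mod_cast Finset.card_le_univ A
  have h4 : q ^ 3 ≤ (A.card : ℝ) ^ 4 := by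
    have h1 : (q ^ ((3:ℝ)/4)) ^ (4:ℕ) ≤ (A.card : ℝ) ^ (4:ℕ) :=
      pow_le_pow_left₀ (Real.rpow_nonneg hq0.le _) hA 4
    calc q ^ 3 = (q ^ ((3:ℝ)/4)) ^ (4:ℕ) := by
          rw [← Real.rpow_natCast (q ^ ((3:ℝ)/4)) 4, ← Real.rpow_mul hq0.le,
            show ((3:ℝ)/4) * ((4:ℕ):ℝ) = ((3:ℕ):ℝ) by norm_num, Real.rpow_natCast]
      _ ≤ (A.card : ℝ) ^ 4 := h1
  have h3 : q ^ 2 ≤ (A.card : ℝ) ^ 3 := by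
    have key : q ^ 2 * q ≤ (A.card : ℝ) ^ 3 * q := by
      calc q ^ 2 * q = q ^ 3 := by ring
        _ ≤ (A.card : ℝ) ^ 4 := h4
        _ = (A.card : ℝ) ^ 3 * (A.card : ℝ) := by ring
        _ ≤ (A.card : ℝ) ^ 3 * q := mul_le_mul_of_nonneg_left hAq (by positivity)
    exact le_of_mul_le_mul_right key hq0
  have hT : (0:ℝ) < ((A ×ˢ A ×ˢ A).card : ℝ) := by
    have : ((A ×ˢ A ×ˢ A).card : ℝ) = (A.card : ℝ) ^ 3 := by
      simp [Finset.card_product]; ring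
    rw [this]; positivity
  constructor
  · exact SumProdAux.key_bound (A ×ˢ A ×ˢ A) (fun t : F × F × F => t.1 * t.2.1 + t.2.2)
      hT (SumProdAux.case1_total A h3)
  · exact SumProdAux.key_bound (A ×ˢ A ×ˢ A) (fun t : F × F × F => t.1 * (t.2.1 + t.2.2))
      hT (SumProdAux.case2_total A h4)
end
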